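/- Assume δ_i·δ_j' ≡ 0 for all i,j, the vectors δ_1(t),…,δ_n(t),δ_1'(t),…,δ_n'(t) are linearly independent for each t, and γ is a striction curve, so that γ'(t) = Σ_{i=1}^n α_i(t)δ_i(t) for smooth functions α_i. For j = 1,…,n define λ_j(t,u) = det(γ'(t)+Σ_{i=1}^n u_iδ_i'(t), δ_1(t),…,δ_n(t), δ_1'(t),…,δ_{j−1}'(t),δ_{j+1}'(t),…,δ_n'(t)) (a determinant of 2n column vectors in ℝ^{2n}), set Δ(t) = det(δ_1(t),…,δ_n(t),δ_1'(t),…,δ_n'(t)), and let η be the vector field η = −∂_t + Σ_{i=1}^n α_i(t)∂_{u_i}. Then at every point p = (t,0,…,0) one has ηλ_j(p) = (−1)^{n+j−1}·α_j(t)·Δ(t). -/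

import Mathlib

open Filter Topology Matrix

noncomputable section

/-- The standard inner product on `ℝ^N`. -/
def dp {N : ℕ} (v w : Fin N → ℝ) : ℝ := ∑ i, v i * w i

/-- The Gram matrix `G(t) = (δ_i'(t) · δ_j'(t))_{i,j}`. -/
def gram {n : ℕ} (δ : Fin n → ℝ → (Fin (2 * n) → ℝ)) (t : ℝ) : Matrix (Fin n) (Fin n) ℝ :=
  Matrix.of fun i j => dp (deriv (δ i) t) (deriv (δ j) t)

/-- `(u_1(t), …, u_n(t)) = - G(t)⁻¹ (γ'(t)·δ_1'(t), …, γ'(t)·δ_n'(t))`. -/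
def strictU {n : ℕ} (γ : ℝ → (Fin (2 * n) → ℝ)) (δ : Fin n → ℝ → (Fin (2 * n) → ℝ))
    (t : ℝ) : Fin n → ℝ :=
  -((gram δ t)⁻¹.mulVec (fun i => dp (deriv γ t) (deriv (δ i) t)))

/-- The curve `σ(t) = γ(t) + Σ_i u_i(t) δ_i(t)`. -/
def strictCurve {n : ℕ} (γ : ℝ → (Fin (2 * n) → ℝ)) (δ : Fin n → ℝ → (Fin (2 * n) → ℝ))
    (t : ℝ) : Fin (2 * n) → ℝ :=
  γ t + ∑ i, strictU γ δ t i • δ i t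

/-- The one-parameter family of `n`-planes `F_{(γ,δ)}(t,u) = γ(t) + Σ_i u_i δ_i(t)`. -/
def ruled {n : ℕ} (γ : ℝ → (Fin (2 * n) → ℝ)) (δ : Fin n → ℝ → (Fin (2 * n) → ℝ)) :
    ℝ × (Fin n → ℝ) → (Fin (2 * n) → ℝ) :=
  fun p => γ p.1 + ∑ i, p.2 i • δ i p.1

/-- `F_{(γ,δ)}` viewed as a map `ℝ^{n+1} → ℝ^{2n}`, `x = (t, u_1, …, u_n)`. -/
def ruledF {n : ℕ} (γ : ℝ → (Fin (2 * n) → ℝ)) (δ : Fin n → ℝ → (Fin (2 * n) → ℝ)) :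
    (Fin (n + 1) → ℝ) → (Fin (2 * n) → ℝ) :=
  fun x => γ (x 0) + ∑ i, x i.succ • δ i (x 0)

/-- The point `(t₀, 0, …, 0) ∈ ℝ^{n+1}`. -/
def bpt {n : ℕ} (t₀ : ℝ) : Fin (n + 1) → ℝ := fun k => if k = 0 then t₀ else 0

def xhat' {m : ℕ} (x : Fin m → ℝ) (q : ℕ) : ℝ := if h : q < m then x ⟨q, h⟩ else 0

/-- The `1`-Morin (Whitney-umbrella type) normal form
`(x_1, …, x_n, x_1x_{n+1}, …, x_{n-1}x_{n+1}, x_{n+1}²) : (ℝ^{n+1},0) → (ℝ^{2n},0)`. -/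
def whitneyNF (n : ℕ) : (Fin (n + 1) → ℝ) → (Fin (2 * n) → ℝ) := fun x k =>
  if k.val < n then xhat' x k.val
  else if k.val < 2 * n - 1 then xhat' x (k.val - n) * xhat' x n
  else (xhat' x n) ^ 2

/-- `δ_q(t)` with a `ℕ` index (`0` if out of range). -/
def dhat {n : ℕ} (δ : Fin n → ℝ → (Fin (2 * n) → ℝ)) (q : ℕ) (t : ℝ) : Fin (2 * n) → ℝ :=
  if h : q < n then δ ⟨q, h⟩ t else 0

/-- `δ_q'(t)` with a `ℕ` index (`0` if out of range). -/
def dphat {n : ℕ} (δ : Fin n → ℝ → (Fin (2 * n) → ℝ)) (q : ℕ) (t : ℝ) : Fin (2 * n) → ℝ :=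
  if h : q < n then deriv (δ ⟨q, h⟩) t else 0

/-- `λ_j(t,u) = det(γ'(t) + Σ_i u_iδ_i'(t), δ_1(t), …, δ_n(t),
δ_1'(t), …, δ_{j-1}'(t), δ_{j+1}'(t), …, δ_n'(t))` (here `j : Fin n` is `0`-indexed,
correspondig to the paper's `λ_{j+1}`); the entries of the matrix are listed as columns. -/
def lamRuled {n : ℕ} (γ : ℝ → (Fin (2 * n) → ℝ)) (δ : Fin n → ℝ → (Fin (2 * n) → ℝ))
    (j : Fin n) : ℝ × (Fin n → ℝ) → ℝ := fun p =>
  Matrix.det (Matrix.of fun (row col : Fin (2 * n)) =>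
    if col.val = 0 then (deriv γ p.1 + ∑ i, p.2 i • deriv (δ i) p.1) row
    else if col.val < n + 1 then dhat δ (col.val - 1) p.1 row
    else dphat δ
      (if col.val - (n + 1) < j.val then col.val - (n + 1) else col.val - (n + 1) + 1)
      p.1 row)

/-- `Δ(t) = det(δ_1(t), …, δ_n(t), δ_1'(t), …, δ_n'(t))` (columns). -/
def bigDelta {n : ℕ} (δ : Fin n → ℝ → (Fin (2 * n) → ℝ)) (t : ℝ) : ℝ :=
  Matrix.det (Matrix.of fun (row col : Fin (2 * n)) =>
    if col.val < n then dhat δ col.val t row else dphat δ (col.val - n) t row)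

section Stmt13Aux

variable {n : ℕ}

private lemma fin_cycleRange_val_of_lt {m : ℕ} {i j : Fin m} (h : j < i) :
    (Fin.cycleRange i j : ℕ) = j.val + 1 := by
  cases m with
  | zero => exact absurd i.isLt (by omega)
  | succ k => exact Fin.coe_cycleRange_of_lt h

private lemma fin_cycleRange_val_self {m : ℕ} (i : Fin m) :
    (Fin.cycleRange i i : ℕ) = 0 := by
  cases m with
  | zero => exact absurd i.isLt (by omega)
  | succ k => rw [Fin.cycleRange_self]; rfl

private lemma fin_cycleRange_val_of_gt {m : ℕ} {i j : Fin m} (h : i < j) :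
    (Fin.cycleRange i j : ℕ) = j.val := by
  cases m with
  | zero => exact absurd i.isLt (by omega)
  | succ k => rw [Fin.cycleRange_of_gt h]

/-- The column family of the matrix defining `lamRuled`. -/
private def Fv (γ : ℝ → (Fin (2 * n) → ℝ)) (δ : Fin n → ℝ → (Fin (2 * n) → ℝ)) (j : Fin n)
    (p : ℝ × (Fin n → ℝ)) : Fin (2 * n) → Fin (2 * n) → ℝ := fun c r =>
  if c.val = 0 then (deriv γ p.1 + ∑ i, p.2 i • deriv (δ i) p.1) r
  else if c.val < n + 1 then dhat δ (c.val - 1) p.1 r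
  else dphat δ
    (if c.val - (n + 1) < j.val then c.val - (n + 1) else c.val - (n + 1) + 1) p.1 r

/-- Column family with `δ_j'` in slot `0` (a `ℕ`-indexed version). -/
private def Tv (δ : Fin n → ℝ → (Fin (2 * n) → ℝ)) (j : Fin n) (s : ℝ) (c : ℕ)
    (r : Fin (2 * n)) : ℝ :=
  if c = 0 then dphat δ j.val s r
  else if c < n + 1 then dhat δ (c - 1) s r
  else dphat δ (if c - (n + 1) < j.val then c - (n + 1) else c - (n + 1) + 1) s r

private def Tcols (δ : Fin n → ℝ → (Fin (2 * n) → ℝ)) (j : Fin n) (s : ℝ) :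
    Fin (2 * n) → Fin (2 * n) → ℝ := fun c r => Tv δ j s c.val r

private def Sf (δ : Fin n → ℝ → (Fin (2 * n) → ℝ)) (j : Fin n) (s : ℝ) : ℝ :=
  Matrix.detRowAlternating (Tcols δ j s)

private def Dv (δ : Fin n → ℝ → (Fin (2 * n) → ℝ)) (s : ℝ) (c : ℕ) (r : Fin (2 * n)) : ℝ :=
  if c < n then dhat δ c s r else dphat δ (c - n) s r

private def Dcols (δ : Fin n → ℝ → (Fin (2 * n) → ℝ)) (s : ℝ) :
    Fin (2 * n) → Fin (2 * n) → ℝ := fun c r => Dv δ s c.val r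

private lemma lamRuled_eq_det (γ : ℝ → (Fin (2 * n) → ℝ)) (δ : Fin n → ℝ → (Fin (2 * n) → ℝ))
    (j : Fin n) (p : ℝ × (Fin n → ℝ)) :
    lamRuled γ δ j p = Matrix.detRowAlternating (Fv γ δ j p) := by
  have h : lamRuled γ δ j p = Matrix.det ((Matrix.of (Fv γ δ j p))ᵀ) := rfl
  rw [h, Matrix.det_transpose]
  rfl

private lemma bigDelta_eq_det (δ : Fin n → ℝ → (Fin (2 * n) → ℝ)) (s : ℝ) :
    bigDelta δ s = Matrix.detRowAlternating (Dcols δ s) := by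
  have h : bigDelta δ s = Matrix.det ((Matrix.of (Dcols δ s))ᵀ) := rfl
  rw [h, Matrix.det_transpose]
  rfl

private lemma Tcols_apply_zero (hn : 0 < n) (δ : Fin n → ℝ → (Fin (2 * n) → ℝ)) (j : Fin n)
    (s : ℝ) : Tcols δ j s ⟨0, by omega⟩ = deriv (δ j) s := by
  funext r
  simp [Tcols, Tv, dphat, j.isLt]

private lemma lamRuled_factor (hn : 0 < n) (γ : ℝ → (Fin (2 * n) → ℝ))
    (δ : Fin n → ℝ → (Fin (2 * n) → ℝ)) (j : Fin n) (a : Fin n → ℝ) (s : ℝ) (u : Fin n → ℝ)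
    (hα : deriv γ s = ∑ i, a i • δ i s) :
    lamRuled γ δ j (s, u) = u j * Sf δ j s := by
  classical
  have h2n : 0 < 2 * n := by omega
  set z : Fin (2 * n) := ⟨0, h2n⟩ with hz
  set T := Tcols δ j s with hT
  have hFv : Fv γ δ j (s, u) =
      Function.update T z ((∑ i, a i • δ i s) + ∑ i, u i • deriv (δ i) s) := by
    funext c r
    by_cases hc : c = z
    · subst hc
      simp only [Function.update_self]
      simp [Fv, hα, hz]
    · have hcv : c.val ≠ 0 := fun h => hc (Fin.ext h)
      rw [Function.update_of_ne hc]
      simp only [Fv, hT, Tcols, Tv, if_neg hcv]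
  rw [lamRuled_eq_det, hFv]
  have fD := (Matrix.detRowAlternating : (Fin (2*n) → ℝ) [⋀^Fin (2*n)]→ₗ[ℝ] ℝ)
  rw [AlternatingMap.map_update_add]
  -- first summand vanishes
  have h1 : (Matrix.detRowAlternating : (Fin (2*n) → ℝ) [⋀^Fin (2*n)]→ₗ[ℝ] ℝ)
      (Function.update T z (∑ i, a i • δ i s)) = 0 := by
    have hsum : (Matrix.detRowAlternating : (Fin (2*n) → ℝ) [⋀^Fin (2*n)]→ₗ[ℝ] ℝ)
        (Function.update T z (∑ i, a i • δ i s))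
        = ∑ i, (Matrix.detRowAlternating : (Fin (2*n) → ℝ) [⋀^Fin (2*n)]→ₗ[ℝ] ℝ)
            (Function.update T z (a i • δ i s)) := by
      exact (Matrix.detRowAlternating.toMultilinearMap.map_update_sum Finset.univ z
        (fun i => a i • δ i s) T)
    rw [hsum]
    apply Finset.sum_eq_zero
    intro i _
    rw [AlternatingMap.map_update_smul]
    have hzero : (Matrix.detRowAlternating : (Fin (2*n) → ℝ) [⋀^Fin (2*n)]→ₗ[ℝ] ℝ)
        (Function.update T z (δ i s)) = 0 := by
      set ci : Fin (2 * n) := ⟨i.val + 1, by omega⟩ with hci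
      apply AlternatingMap.map_eq_zero_of_eq _ _
        (i := z) (j := ci)
      · have hne : ci ≠ z := by simp [hci, hz, Fin.ext_iff]
        rw [Function.update_self, Function.update_of_ne hne]
        funext r
        have h1 : ci.val ≠ 0 := by simp [hci]
        have h2 : ci.val < n + 1 := by rw [hci]; exact Nat.succ_lt_succ i.isLt
        simp only [hT, Tcols, Tv, if_neg h1, if_pos h2]
        simp [dhat, hci, i.isLt]
      · simp [hz, hci, Fin.ext_iff]
    rw [hzero, smul_zero]
  rw [h1, zero_add]
  have hsum2 : (Matrix.detRowAlternating : (Fin (2*n) → ℝ) [⋀^Fin (2*n)]→ₗ[ℝ] ℝ)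
      (Function.update T z (∑ i, u i • deriv (δ i) s))
      = ∑ i, (Matrix.detRowAlternating : (Fin (2*n) → ℝ) [⋀^Fin (2*n)]→ₗ[ℝ] ℝ)
          (Function.update T z (u i • deriv (δ i) s)) :=
    Matrix.detRowAlternating.toMultilinearMap.map_update_sum Finset.univ z
      (fun i => u i • deriv (δ i) s) T
  rw [hsum2]
  rw [Finset.sum_eq_single j]
  · rw [AlternatingMap.map_update_smul]
    have : Function.update T z (deriv (δ j) s) = T := by
      rw [show deriv (δ j) s = T z from (Tcols_apply_zero hn δ j s).symm]
      exact Function.update_eq_self z T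
    rw [this]
    rfl
  · intro i _ hij
    rw [AlternatingMap.map_update_smul]
    have hzero : (Matrix.detRowAlternating : (Fin (2*n) → ℝ) [⋀^Fin (2*n)]→ₗ[ℝ] ℝ)
        (Function.update T z (deriv (δ i) s)) = 0 := by
      set ci : Fin (2 * n) := if h : i.val < j.val then
          ⟨n + 1 + i.val, by have := j.isLt; omega⟩
        else ⟨n + i.val, by have := i.isLt; omega⟩ with hci
      have hciv : ci.val = if i.val < j.val then n + 1 + i.val else n + i.val := by
        by_cases h : i.val < j.val <;> simp [hci, h]
      have hivj : i.val ≠ j.val := fun h => hij (Fin.ext h)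
      have hge : n + 1 ≤ ci.val := by
        rw [hciv]; split <;> omega
      apply AlternatingMap.map_eq_zero_of_eq _ _ (i := z) (j := ci)
      · have hne : ci ≠ z := by
          intro h
          have h' := congrArg Fin.val h
          rw [show z.val = 0 from rfl] at h'
          omega
        rw [Function.update_self, Function.update_of_ne hne]
        funext r
        have h1 : ¬ ci.val = 0 := by omega
        have h2 : ¬ ci.val < n + 1 := by omega
        simp only [hT, Tcols, Tv, if_neg h1, if_neg h2]
        have harg : (if ci.val - (n + 1) < j.val then ci.val - (n + 1)
            else ci.val - (n + 1) + 1) = i.val := by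
          rw [hciv]
          by_cases h : i.val < j.val
          · simp only [if_pos h]
            have : n + 1 + i.val - (n + 1) = i.val := by omega
            rw [this, if_pos h]
          · simp only [if_neg h]
            have h3 : n + i.val - (n + 1) = i.val - 1 := by omega
            rw [h3, if_neg (by omega)]
            omega
        rw [harg]
        simp [dphat, i.isLt]
      · intro h
        have h' := congrArg Fin.val h
        rw [show z.val = 0 from rfl] at h'
        omega
    rw [hzero, smul_zero]
  · intro h
    exact absurd (Finset.mem_univ j) h

private lemma bigDelta_eq_sf (hn : 0 < n) (δ : Fin n → ℝ → (Fin (2 * n) → ℝ)) (j : Fin n)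
    (s : ℝ) : bigDelta δ s = (-1 : ℝ) ^ (n + j.val) * Sf δ j s := by
  classical
  have hk : n + j.val < 2 * n := by have := j.isLt; omega
  set k : Fin (2 * n) := ⟨n + j.val, hk⟩ with hkdef
  have hcomp : Dcols δ s = Tcols δ j s ∘ (Fin.cycleRange k) := by
    funext y r
    simp only [Function.comp_apply, Dcols, Tcols]
    rcases lt_trichotomy y k with hy | hy | hy
    · have hval : (Fin.cycleRange k y : ℕ) = y.val + 1 := fin_cycleRange_val_of_lt hy
      have hyk : y.val < n + j.val := hy
      rw [hval]
      simp only [Dv, Tv]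
      by_cases h1 : y.val < n
      · rw [if_pos h1, if_neg (by omega), if_pos (by omega)]
        simp
      · rw [if_neg h1, if_neg (by omega), if_neg (by omega)]
        have hlt : y.val + 1 - (n + 1) < j.val := by omega
        rw [if_pos hlt]
        congr 1
        omega
    · subst hy
      have hval : (Fin.cycleRange k k : ℕ) = 0 := fin_cycleRange_val_self k
      rw [hval]
      simp only [Dv, Tv, if_pos rfl]
      have hkv1 : ((⟨n + j.val, hk⟩ : Fin (2 * n)) : ℕ) = n + j.val := rfl
      have hkv2 : (k : ℕ) = n + j.val := rfl
      rw [if_neg (by omega)]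
      congr 1
      omega
    · have hval : (Fin.cycleRange k y : ℕ) = y.val := fin_cycleRange_val_of_gt hy
      have hyk : n + j.val < y.val := hy
      rw [hval]
      simp only [Dv, Tv]
      rw [if_neg (by omega), if_neg (by omega), if_neg (by omega),
        if_neg (by omega)]
      congr 1
      omega
  rw [bigDelta_eq_det, hcomp]
  rw [AlternatingMap.map_perm]
  rw [Fin.sign_cycleRange]
  show ((-1 : ℤˣ) ^ k.val) • (Matrix.detRowAlternating (Tcols δ j s)) = _
  rw [show k.val = n + j.val from rfl]
  rcases Nat.even_or_odd (n + j.val) with he | ho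
  · rw [he.neg_one_pow, (he.neg_one_pow : (-1 : ℝ) ^ (n + j.val) = 1), one_smul, one_mul]
    rfl
  · rw [ho.neg_one_pow, (ho.neg_one_pow : (-1 : ℝ) ^ (n + j.val) = -1)]
    show ((-1 : ℤˣ) : ℤ) • (Matrix.detRowAlternating (Tcols δ j s)) = _
    push_cast
    rw [neg_one_smul, neg_one_mul]
    rfl

private lemma dhat_comp_diff {J : Set ℝ} (hJ : IsOpen J)
    (δ : Fin n → ℝ → (Fin (2 * n) → ℝ)) (hδ : ∀ i, ContDiffOn ℝ (⊤ : ℕ∞) (δ i) J)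
    {t : ℝ} (ht : t ∈ J) (q : ℕ) (r : Fin (2 * n)) :
    DifferentiableAt ℝ (fun s => dhat δ q s r) t := by
  by_cases h : q < n
  · simp only [dhat, dif_pos h]
    have hd : DifferentiableAt ℝ (δ ⟨q, h⟩) t :=
      (((hδ ⟨q, h⟩).contDiffAt (hJ.mem_nhds ht)).differentiableAt (by simp))
    exact (differentiableAt_pi.mp hd) r
  · simp only [dhat, dif_neg h]
    exact differentiableAt_const _

private lemma dphat_comp_diff {J : Set ℝ} (hJ : IsOpen J)
    (δ : Fin n → ℝ → (Fin (2 * n) → ℝ)) (hδ : ∀ i, ContDiffOn ℝ (⊤ : ℕ∞) (δ i) J)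
    {t : ℝ} (ht : t ∈ J) (q : ℕ) (r : Fin (2 * n)) :
    DifferentiableAt ℝ (fun s => dphat δ q s r) t := by
  by_cases h : q < n
  · simp only [dphat, dif_pos h]
    have hd' : ContDiffOn ℝ (⊤ : ℕ∞) (deriv (δ ⟨q, h⟩)) J :=
      (hδ ⟨q, h⟩).deriv_of_isOpen hJ (by simp)
    have hd : DifferentiableAt ℝ (deriv (δ ⟨q, h⟩)) t :=
      ((hd'.contDiffAt (hJ.mem_nhds ht)).differentiableAt (by simp))
    exact (differentiableAt_pi.mp hd) r
  · simp only [dphat, dif_neg h]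
    exact differentiableAt_const _

private lemma Sf_diffAt {J : Set ℝ} (hJ : IsOpen J)
    (δ : Fin n → ℝ → (Fin (2 * n) → ℝ)) (hδ : ∀ i, ContDiffOn ℝ (⊤ : ℕ∞) (δ i) J)
    (j : Fin n) {t : ℝ} (ht : t ∈ J) :
    DifferentiableAt ℝ (Sf δ j) t := by
  classical
  have hent : ∀ (c r : Fin (2 * n)), DifferentiableAt ℝ (fun s => Tcols δ j s c r) t := by
    intro c r
    simp only [Tcols, Tv]
    by_cases h0 : c.val = 0
    · simp only [if_pos h0]
      exact dphat_comp_diff hJ δ hδ ht _ r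
    · simp only [if_neg h0]
      by_cases h1 : c.val < n + 1
      · simp only [if_pos h1]
        exact dhat_comp_diff hJ δ hδ ht _ r
      · simp only [if_neg h1]
        exact dphat_comp_diff hJ δ hδ ht _ r
  have hS : Sf δ j = fun s => ∑ σ : Equiv.Perm (Fin (2 * n)),
      ((Equiv.Perm.sign σ : ℤ) : ℝ) * ∏ i, Tcols δ j s (σ i) i := by
    funext s
    exact Matrix.det_apply' (Matrix.of (Tcols δ j s))
  rw [hS]
  apply DifferentiableAt.fun_sum
  intro σ _
  apply DifferentiableAt.const_mul
  have := HasFDerivAt.finset_prod (u := Finset.univ)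
    (g := fun i s => Tcols δ j s (σ i) i)
    (g' := fun i => fderiv ℝ (fun s => Tcols δ j s (σ i) i) t) (x := t)
    (fun i _ => (hent (σ i) i).hasFDerivAt)
  exact this.differentiableAt

end Stmt13Aux


/-- With `γ' = Σ α_iδ_i` and `η = -∂_t + Σ α_i∂_{u_i}`, at every point
`p = (t,0,…,0)` one has `ηλ_j(p) = (-1)^{n+j-1} α_j(t) Δ(t)` (here `j : Fin n` is
`0`-indexed, so the sign is `(-1)^{n + j}`). -/
theorem stmt13 {n : ℕ} (hn : 0 < n) (J : Set ℝ) (hJ : IsOpen J)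
    (γ : ℝ → (Fin (2 * n) → ℝ)) (δ : Fin n → ℝ → (Fin (2 * n) → ℝ))
    (hγ : ContDiffOn ℝ (⊤ : ℕ∞) γ J) (hδ : ∀ i, ContDiffOn ℝ (⊤ : ℕ∞) (δ i) J)
    (horth : ∀ t ∈ J, ∀ i j, dp (δ i t) (δ j t) = if i = j then 1 else 0)
    (hperp : ∀ t ∈ J, ∀ i j, dp (δ i t) (deriv (δ j) t) = 0)
    (hlin : ∀ t ∈ J,
      LinearIndependent ℝ (Sum.elim (fun i => δ i t) (fun i => deriv (δ i) t)))
    (α : Fin n → ℝ → ℝ) (hαs : ∀ i, ContDiffOn ℝ (⊤ : ℕ∞) (α i) J)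
    (hα : ∀ t ∈ J, deriv γ t = ∑ i, α i t • δ i t) :
    ∀ t ∈ J, ∀ j : Fin n,
      fderiv ℝ (lamRuled γ δ j) (t, (0 : Fin n → ℝ)) ((-1 : ℝ), fun i => α i t)
        = (-1 : ℝ) ^ (n + j.val) * (α j t * bigDelta δ t) := by
  classical
  intro t ht j
  have hS : DifferentiableAt ℝ (Sf δ j) t := Sf_diffAt hJ δ hδ j ht
  set g : ℝ × (Fin n → ℝ) → ℝ := fun p => p.2 j * Sf δ j p.1 with hg
  have heq : lamRuled γ δ j =ᶠ[𝓝 (t, (0 : Fin n → ℝ))] g := by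
    have hopen : IsOpen {p : ℝ × (Fin n → ℝ) | p.1 ∈ J} := hJ.preimage continuous_fst
    have hmem : (t, (0 : Fin n → ℝ)) ∈ {p : ℝ × (Fin n → ℝ) | p.1 ∈ J} := ht
    filter_upwards [hopen.mem_nhds hmem] with p hp
    exact lamRuled_factor hn γ δ j (fun i => α i p.1) p.1 p.2 (hα p.1 hp)
  set L1 : (ℝ × (Fin n → ℝ)) →L[ℝ] ℝ :=
    (ContinuousLinearMap.proj j).comp (ContinuousLinearMap.snd ℝ ℝ (Fin n → ℝ)) with hL1
  have h1 : HasFDerivAt (fun p : ℝ × (Fin n → ℝ) => p.2 j) L1 (t, (0 : Fin n → ℝ)) :=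
    L1.hasFDerivAt
  have h2 : HasFDerivAt (fun p : ℝ × (Fin n → ℝ) => Sf δ j p.1)
      ((fderiv ℝ (Sf δ j) t).comp (ContinuousLinearMap.fst ℝ ℝ (Fin n → ℝ)))
      (t, (0 : Fin n → ℝ)) :=
    (HasFDerivAt.comp (f := (Prod.fst : ℝ × (Fin n → ℝ) → ℝ)) (t, (0 : Fin n → ℝ))
      hS.hasFDerivAt hasFDerivAt_fst :)
  have hmul := h1.fun_mul h2
  have hfd : fderiv ℝ (lamRuled γ δ j) (t, (0 : Fin n → ℝ))
      = fderiv ℝ g (t, (0 : Fin n → ℝ)) := heq.fderiv_eq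
  rw [hfd, hmul.fderiv]
  have hsq : ((-1 : ℝ)) ^ (n + j.val) * ((-1 : ℝ)) ^ (n + j.val) = 1 := by
    rw [← pow_add]
    exact Even.neg_one_pow ⟨n + j.val, rfl⟩
  rw [bigDelta_eq_sf hn δ j t]
  simp only [ContinuousLinearMap.add_apply, ContinuousLinearMap.coe_smul', Pi.smul_apply,
    ContinuousLinearMap.coe_comp', Function.comp_apply, ContinuousLinearMap.coe_fst',
    ContinuousLinearMap.coe_snd', ContinuousLinearMap.proj_apply, smul_eq_mul, hL1,
    Pi.zero_apply, zero_mul, zero_add]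
  linear_combination (-(α j t * Sf δ j t)) * hsq
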